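/- arXiv:2505.05688 — 4 statements merged into one kernel-verified Lean document; each statement's English description precedes it below -/
import Mathlib

section
/- The Lobachevsky function satisfies L(π/4) = G/2, where G = Σ_{k≥0} (-1)^k/(2k+1)² is Catalan's constant; equivalently, the volume of the hyperbolic regular ideal octahedron, v_oct = 8·L(π/4), equals 4G. -/
open Real

noncomputable def Lob (θ : ℝ) : ℝ := -∫ t in (0:ℝ)..θ, Real.log |2 * Real.sin t|

noncomputable def volB (n : ℝ) : ℝ := 2 * n * Lob (π / n)

noncomputable def vtet : ℝ := 3 * Lob (π / 3)

noncomputable def voct : ℝ := 8 * Lob (π / 4)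

section Aux
open MeasureTheory intervalIntegral

lemma log_int01 : IntervalIntegrable Real.log volume 0 1 := by
  rw [intervalIntegrable_iff_integrableOn_Ioc_of_le zero_le_one]
  have hg : IntegrableOn (fun x : ℝ => 2 * x ^ (-(1/2) : ℝ)) (Set.Ioc 0 1) volume := by
    have := (intervalIntegrable_rpow' (a := 0) (b := 1) (r := -(1/2)) (by norm_num))
    rw [intervalIntegrable_iff_integrableOn_Ioc_of_le zero_le_one] at this
    exact this.const_mul 2
  refine hg.integrable.mono Real.measurable_log.aestronglyMeasurable ?_
  rw [ae_restrict_iff' measurableSet_Ioc]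
  filter_upwards with x hx
  have hx0 : 0 < x := hx.1
  have hrp : (0:ℝ) < x ^ (-(1/2) : ℝ) := rpow_pos_of_pos hx0 _
  have hlog : Real.log x ≤ 0 := log_nonpos hx0.le hx.2
  have key : -Real.log x ≤ 2 * x ^ (-(1/2) : ℝ) := by
    have h1 : Real.log (x ^ (-(1/2) : ℝ)) = -(1/2) * Real.log x := log_rpow hx0 _
    have h2 : Real.log (x ^ (-(1/2) : ℝ)) ≤ x ^ (-(1/2) : ℝ) - 1 :=
      log_le_sub_one_of_pos hrp
    nlinarith
  calc ‖Real.log x‖ = -Real.log x := by rw [Real.norm_eq_abs, abs_of_nonpos hlog]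
    _ ≤ 2 * x ^ (-(1/2) : ℝ) := key
    _ ≤ ‖2 * x ^ (-(1/2) : ℝ)‖ := le_abs_self _



lemma powlog_int (n : ℕ) : IntervalIntegrable (fun x : ℝ => x ^ n * Real.log x) volume 0 1 := by
  refine log_int01.mono_fun ?_ ?_
  · exact ((measurable_id.pow_const n).mul Real.measurable_log).aestronglyMeasurable
  · rw [Filter.EventuallyLE, ae_restrict_iff' measurableSet_uIoc]
    filter_upwards with x hx
    rw [Set.uIoc_of_le zero_le_one] at hx
    have hx0 : 0 < x := hx.1
    rw [Real.norm_eq_abs, Real.norm_eq_abs, abs_mul, abs_of_nonneg (pow_nonneg hx0.le n)]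
    nlinarith [abs_nonneg (Real.log x), pow_le_one₀ hx0.le hx.2 (n := n)]

lemma powlog_val (n : ℕ) :
    ∫ x in (0:ℝ)..1, x ^ n * Real.log x = -(1 / (n+1)^2) := by
  have key : ∫ x in (0:ℝ)..1, x ^ n * Real.log x =
      ((1:ℝ)^(n+1) * Real.log 1 / (n+1) - (1:ℝ)^(n+1) / (n+1)^2) -
      ((0:ℝ)^(n+1) * Real.log 0 / (n+1) - (0:ℝ)^(n+1) / (n+1)^2) := by
    apply integral_eq_sub_of_hasDerivAt_of_le zero_le_one
      (f := fun x => x^(n+1) * Real.log x / (n+1) - x^(n+1) / (n+1)^2)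
    · have hEq : (fun x : ℝ => x^(n+1) * Real.log x / (n+1) - x^(n+1) / (n+1)^2)
          = fun x : ℝ => (x^n * (x * Real.log x)) / (n+1) - x^(n+1) / (n+1)^2 := by
        funext x; ring
      rw [hEq]
      exact (((continuous_pow n).mul Real.continuous_mul_log).div_const _ |>.sub
        ((continuous_pow (n+1)).div_const _)).continuousOn
    · intro x hx
      have hx0 : x ≠ 0 := ne_of_gt hx.1
      have h1 : HasDerivAt (fun x : ℝ => x^(n+1) * Real.log x)
          ((↑(n+1) * x ^ n) * Real.log x + x^(n+1) * x⁻¹) x :=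
        (hasDerivAt_pow (n+1) x).mul (Real.hasDerivAt_log hx0)
      have h2 := (h1.div_const ((n:ℝ)+1)).sub ((hasDerivAt_pow (n+1) x).div_const (((n:ℝ)+1)^2))
      convert h2 using 1
      · rfl
      have hn : ((n:ℝ)+1) ≠ 0 := by positivity
      simp only [Nat.add_sub_cancel]; push_cast
      field_simp
      ring
    · exact powlog_int n
  rw [key]
  simp [Real.log_one]



lemma summable_aux : Summable (fun k : ℕ => 1 / (2*(k:ℝ)+1)^2) := by
  have h2 : Summable (fun n : ℕ => 1 / ((n:ℝ))^2) := by
    simpa [Real.rpow_natCast] using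
      (Real.summable_one_div_nat_rpow (p := 2)).mpr (by norm_num)
  have h3 : Summable (fun n : ℕ => 1 / ((n:ℝ)+1)^2) := by
    have := (summable_nat_add_iff (f := fun n : ℕ => 1 / ((n:ℝ))^2) 1).mpr h2
    simpa using this
  refine h3.of_nonneg_of_le (fun k => by positivity) (fun k => ?_)
  apply one_div_le_one_div_of_le (by positivity)
  nlinarith [Nat.cast_nonneg (α := ℝ) k]

lemma hneg_aux (x : ℝ) (k : ℕ) : (-(x^2))^k = (-1)^k * x^(2*k) := by
  rw [pow_mul, ← neg_one_mul, mul_pow]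

lemma series_int : ∫ x in (0:ℝ)..1, Real.log x / (1+x^2)
    = -∑' k : ℕ, (-1:ℝ)^k / (2*k+1)^2 := by
  have hmeas : ∀ k : ℕ, AEStronglyMeasurable (fun x : ℝ => (-(x^2))^k * Real.log x)
      (volume.restrict (Set.Ioc (0:ℝ) 1)) := fun k =>
    ((((measurable_id.pow_const 2).neg.pow_const k).mul Real.measurable_log)).aestronglyMeasurable
  -- integrability of each term
  have hint : ∀ k : ℕ, IntegrableOn (fun x : ℝ => (-(x^2))^k * Real.log x)
      (Set.Ioc (0:ℝ) 1) volume := by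
    intro k
    have h := powlog_int (2*k)
    rw [intervalIntegrable_iff_integrableOn_Ioc_of_le zero_le_one] at h
    have : IntegrableOn (fun x : ℝ => (-1:ℝ)^k * (x^(2*k) * Real.log x))
        (Set.Ioc (0:ℝ) 1) volume := h.const_mul _
    apply this.congr_fun _ measurableSet_Ioc
    intro x hx
    simp only [hneg_aux]
    ring
  -- value of each term integral
  have hval : ∀ k : ℕ, ∫ x in Set.Ioc (0:ℝ) 1, (-(x^2))^k * Real.log x
      = -((-1:ℝ)^k / (2*k+1)^2) := by
    intro k
    have : ∫ x in Set.Ioc (0:ℝ) 1, (-(x^2))^k * Real.log x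
        = (-1:ℝ)^k * ∫ x in Set.Ioc (0:ℝ) 1, x^(2*k) * Real.log x := by
      rw [← MeasureTheory.integral_const_mul]
      apply setIntegral_congr_fun measurableSet_Ioc
      intro x hx
      simp only [hneg_aux]; ring
    rw [this, ← intervalIntegral.integral_of_le zero_le_one, powlog_val]
    push_cast
    ring
  -- norm integrals
  have hnorm : ∀ k : ℕ, ∫ x in Set.Ioc (0:ℝ) 1, ‖(-(x^2))^k * Real.log x‖
      = 1 / (2*(k:ℝ)+1)^2 := by
    intro k
    have : ∫ x in Set.Ioc (0:ℝ) 1, ‖(-(x^2))^k * Real.log x‖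
        = ∫ x in Set.Ioc (0:ℝ) 1, -(x^(2*k) * Real.log x) := by
      apply setIntegral_congr_fun measurableSet_Ioc
      intro x hx
      simp only [Real.norm_eq_abs, abs_mul, abs_pow, abs_neg,
        abs_of_nonneg (sq_nonneg x), abs_of_nonpos (Real.log_nonpos hx.1.le hx.2), ← pow_mul]
      ring
    rw [this, MeasureTheory.integral_neg, ← intervalIntegral.integral_of_le zero_le_one, powlog_val]
    push_cast; ring
  have hsum : Summable fun k : ℕ => ∫ x in Set.Ioc (0:ℝ) 1, ‖(-(x^2))^k * Real.log x‖ := by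
    simp_rw [hnorm]; exact summable_aux
  have key := integral_tsum_of_summable_integral_norm
    (μ := volume.restrict (Set.Ioc (0:ℝ) 1)) (fun k => (hint k).integrable) hsum
  -- identify pointwise sum
  have hpt : ∀ x ∈ Set.Ioc (0:ℝ) 1,
      (∑' k : ℕ, (-(x^2))^k * Real.log x) = Real.log x / (1+x^2) := by
    intro x hx
    rcases eq_or_lt_of_le hx.2 with h1 | h1
    · simp [h1, Real.log_one]
    · rw [tsum_mul_right, tsum_geometric_of_norm_lt_one (by
        rw [norm_neg, Real.norm_eq_abs, abs_of_nonneg (sq_nonneg x)]; nlinarith [hx.1])]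
      rw [sub_neg_eq_add]
      ring
  rw [intervalIntegral.integral_of_le zero_le_one]
  rw [← setIntegral_congr_fun measurableSet_Ioc hpt, ← key]
  rw [← tsum_neg]
  congr 1; funext k
  rw [hval k]


lemma arctan_image : Real.arctan '' Set.Ioc 0 1 = Set.Ioc 0 (π/4) := by
  ext y
  constructor
  · rintro ⟨x, hx, rfl⟩
    refine ⟨by simpa [Real.arctan_zero] using Real.arctan_strictMono hx.1, ?_⟩
    have := Real.arctan_strictMono.monotone hx.2
    rwa [Real.arctan_one] at this
  · rintro ⟨hy1, hy2⟩
    have hylt : y < π/2 := lt_of_le_of_lt hy2 (by linarith [pi_pos])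
    have hygt : -(π/2) < y := by linarith [pi_pos]
    refine ⟨Real.tan y, ⟨?_, ?_⟩, Real.arctan_tan hygt hylt⟩
    · exact Real.tan_pos_of_pos_of_lt_pi_div_two hy1 hylt
    · by_contra h
      push_neg at h
      have := Real.arctan_strictMono h
      rw [Real.arctan_one, Real.arctan_tan hygt hylt] at this
      exact absurd this (not_lt.mpr hy2)

lemma subst_tan : ∫ x in (0:ℝ)..1, Real.log x / (1+x^2)
    = ∫ t in Set.Ioc (0:ℝ) (π/4), Real.log (Real.tan t) := by
  have key := integral_image_eq_integral_abs_deriv_smul (f := Real.arctan)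
    (f' := fun x => 1/(1+x^2)) (s := Set.Ioc (0:ℝ) 1) measurableSet_Ioc
    (fun x _ => (Real.hasDerivAt_arctan x).hasDerivWithinAt)
    (Real.arctan_injective.injOn) (fun t => Real.log (Real.tan t))
  rw [arctan_image] at key
  rw [key, intervalIntegral.integral_of_le zero_le_one]
  apply setIntegral_congr_fun measurableSet_Ioc
  intro x hx
  have h1 : (0:ℝ) < 1 + x^2 := by positivity
  simp only [Real.tan_arctan, smul_eq_mul,
    abs_of_pos (show (0:ℝ) < 1/(1+x^2) by positivity)]
  ring



lemma abslog_int : IntervalIntegrable (fun t : ℝ => |Real.log t|) volume 0 (π/2) := by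
  have h1 : IntervalIntegrable (fun t : ℝ => |Real.log t|) volume 0 1 := log_int01.abs
  have h2 : IntervalIntegrable (fun t : ℝ => |Real.log t|) volume 1 (π/2) := by
    apply ContinuousOn.intervalIntegrable
    apply (Real.continuousOn_log.mono ?_).abs
    intro x hx
    rw [Set.uIcc_of_le (by linarith [pi_gt_three])] at hx
    simp only [Set.mem_compl_iff, Set.mem_singleton_iff]
    intro h; rw [h] at hx; linarith [hx.1]
  exact h1.trans h2

lemma sin_int : IntervalIntegrable (fun t : ℝ => Real.log (2 * Real.sin t)) volume 0 (π/2) := by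
  have hg : IntervalIntegrable (fun t : ℝ => Real.log 2 + |Real.log t|) volume 0 (π/2) :=
    intervalIntegrable_const.add abslog_int
  refine hg.mono_fun ?_ ?_
  · exact (Real.measurable_log.comp
      (measurable_const.mul Real.measurable_sin)).aestronglyMeasurable
  · rw [Filter.EventuallyLE, ae_restrict_iff' measurableSet_uIoc]
    filter_upwards with t ht
    rw [Set.uIoc_of_le (by positivity : (0:ℝ) ≤ π/2)] at ht
    have ht0 : 0 < t := ht.1
    have hsin : 0 < Real.sin t := Real.sin_pos_of_pos_of_lt_pi ht0
      (lt_of_le_of_lt ht.2 (by linarith [pi_pos]))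
    have hup : Real.log (2 * Real.sin t) ≤ Real.log 2 := by
      apply Real.log_le_log (by positivity)
      nlinarith [Real.sin_le_one t]
    have hlo : Real.log t ≤ Real.log (2 * Real.sin t) := by
      apply Real.log_le_log ht0
      have h1 := Real.mul_le_sin ht0.le ht.2
      have hπ := pi_pos
      have key : t ≤ 2 * (2/π*t) := by
        rw [div_mul_eq_mul_div, ← mul_div_assoc, le_div_iff₀ hπ]
        nlinarith [pi_le_four]
      nlinarith
    have h2 : (0:ℝ) ≤ Real.log 2 := Real.log_nonneg one_le_two
    rw [Real.norm_eq_abs, Real.norm_eq_abs,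
      abs_of_nonneg (show (0:ℝ) ≤ Real.log 2 + |Real.log t| by
        linarith [abs_nonneg (Real.log t)]), abs_le]
    constructor
    · have : -|Real.log t| ≤ Real.log t := neg_abs_le _
      linarith
    · have : Real.log (2 * Real.sin t) ≤ Real.log 2 + |Real.log t| := by
        linarith [abs_nonneg (Real.log t)]
      linarith




lemma main_lob : Lob (π / 4) = (∑' k : ℕ, (-1 : ℝ) ^ k / (2 * k + 1) ^ 2) / 2 := by
  have hπ := pi_pos
  have h04 : (0:ℝ) ≤ π/4 := by linarith
  have h42 : π/4 ≤ π/2 := by linarith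
  set G : ℝ := ∑' k : ℕ, (-1 : ℝ) ^ k / (2 * k + 1) ^ 2 with hG
  set f : ℝ → ℝ := fun t => Real.log (2 * Real.sin t) with hf
  -- integrabilities
  have hI : IntervalIntegrable f volume 0 (π/4) :=
    sin_int.mono_set (by rw [Set.uIcc_of_le h04, Set.uIcc_of_le (by linarith)]
                         exact Set.Icc_subset_Icc le_rfl h42)
  have hI2 : IntervalIntegrable f volume (π/4) (π/2) :=
    sin_int.mono_set (by rw [Set.uIcc_of_le h42, Set.uIcc_of_le (by linarith)]
                         exact Set.Icc_subset_Icc h04 le_rfl)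
  have hcospos : ∀ t ∈ Set.Icc (0:ℝ) (π/4), 0 < Real.cos t := by
    intro t ht
    apply Real.cos_pos_of_mem_Ioo
    constructor <;> [linarith [ht.1]; linarith [ht.2]]
  have hJ : IntervalIntegrable (fun t : ℝ => Real.log (2 * Real.cos t)) volume 0 (π/4) := by
    apply ContinuousOn.intervalIntegrable
    rw [Set.uIcc_of_le h04]
    apply ContinuousOn.log ((continuous_const.mul Real.continuous_cos).continuousOn)
    intro t ht
    have := hcospos t ht
    exact (mul_pos two_pos this).ne'
  set I : ℝ := ∫ t in (0:ℝ)..(π/4), f t with hIdef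
  set J : ℝ := ∫ t in (0:ℝ)..(π/4), Real.log (2 * Real.cos t) with hJdef
  set S : ℝ := ∫ t in (0:ℝ)..(π/2), f t with hSdef
  -- J as integral of f on [π/4, π/2]
  have claimC : J = ∫ t in (π/4:ℝ)..(π/2), f t := by
    have h := intervalIntegral.integral_comp_sub_left (a := (0:ℝ)) (b := π/4) f (π/2)
    have h2 : (fun x : ℝ => f (π/2 - x)) = fun t : ℝ => Real.log (2 * Real.cos t) := by
      funext t; rw [hf]; simp [Real.sin_pi_div_two_sub]
    rw [h2] at h
    rw [hJdef, h, show π/2 - π/4 = π/4 by ring, show π/2 - (0:ℝ) = π/2 by ring]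
  -- split S
  have hsplit : I + (∫ t in (π/4:ℝ)..(π/2), f t) = S :=
    integral_add_adjacent_intervals hI hI2
  -- doubling
  have claimAB : I + J = 2⁻¹ * S := by
    have hadd : I + J = ∫ t in (0:ℝ)..(π/4), (f t + Real.log (2 * Real.cos t)) :=
      (integral_add hI hJ).symm
    have hcongr : ∫ t in (0:ℝ)..(π/4), (f t + Real.log (2 * Real.cos t))
        = ∫ t in (0:ℝ)..(π/4), f (2*t) := by
      rw [integral_of_le h04, integral_of_le h04]
      apply setIntegral_congr_fun measurableSet_Ioc
      intro t ht
      have hs : 0 < Real.sin t := Real.sin_pos_of_pos_of_lt_pi ht.1 (by linarith [ht.2])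
      have hc : 0 < Real.cos t := hcospos t ⟨ht.1.le, ht.2⟩
      simp only [hf]
      rw [← Real.log_mul (by positivity) (by positivity)]
      congr 1
      rw [Real.sin_two_mul]; ring
    have hdb := intervalIntegral.mul_integral_comp_mul_left (a := (0:ℝ)) (b := π/4)
      (c := 2) (f := f)
    rw [hadd, hcongr]
    rw [show (2:ℝ) * 0 = 0 by ring, show (2:ℝ) * (π/4) = π/2 by ring] at hdb
    rw [← hSdef] at hdb
    linarith
  have hIJ0 : I + J = 0 := by
    have : S = I + J := by rw [← hsplit, claimC]
    rw [this] at claimAB; linarith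
  -- difference
  have hdiff : I - J = -G := by
    have h1 : I - J = ∫ t in (0:ℝ)..(π/4), (f t - Real.log (2 * Real.cos t)) :=
      (integral_sub hI hJ).symm
    have h2 : ∫ t in (0:ℝ)..(π/4), (f t - Real.log (2 * Real.cos t))
        = ∫ t in Set.Ioc (0:ℝ) (π/4), Real.log (Real.tan t) := by
      rw [integral_of_le h04]
      apply setIntegral_congr_fun measurableSet_Ioc
      intro t ht
      have hs : 0 < Real.sin t := Real.sin_pos_of_pos_of_lt_pi ht.1 (by linarith [ht.2])
      have hc : 0 < Real.cos t := hcospos t ⟨ht.1.le, ht.2⟩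
      simp only [hf]
      rw [Real.tan_eq_sin_div_cos, Real.log_div (by positivity) (by positivity),
        Real.log_mul (by norm_num) (by positivity),
        Real.log_mul (by norm_num) (by positivity)]
      ring
    rw [h1, h2, ← subst_tan, series_int]
  have hIval : I = -G/2 := by linarith
  -- Lob equals -I
  have hLob : Lob (π/4) = -I := by
    rw [Lob, hIdef, neg_inj, integral_of_le h04, integral_of_le h04]
    apply setIntegral_congr_fun measurableSet_Ioc
    intro t ht
    have hs : 0 < Real.sin t := Real.sin_pos_of_pos_of_lt_pi ht.1 (by linarith [ht.2])
    simp only [hf]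
    rw [abs_of_pos (show (0:ℝ) < 2 * Real.sin t by positivity)]
  rw [hLob, hIval]; ring


end Aux

theorem stmt3 :
    Lob (π / 4) = (∑' k : ℕ, (-1 : ℝ) ^ k / (2 * k + 1) ^ 2) / 2 ∧
    voct = 4 * ∑' k : ℕ, (-1 : ℝ) ^ k / (2 * k + 1) ^ 2 := by
  refine ⟨main_lob, ?_⟩
  rw [voct, main_lob]; ring
end

section
/- For every integer n ≥ 3, the volume of the hyperbolic regular ideal n-bipyramid satisfies vol(B_n) = 2n·L(π/n) < 2π·log(n/2). -/
open Real

namespace VolBAux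

open MeasureTheory intervalIntegral

lemma exp_neg_le (x : ℝ) (hx : 0 ≤ x) : Real.exp (-x) ≤ 1 - x + x^2/2 := by
  have h : 1 + x + x^2/2 ≤ Real.exp x := by
    have := Real.sum_le_exp_of_nonneg hx 3
    simp [Finset.sum_range_succ] at this
    nlinarith [this]
  have hpos : (0:ℝ) < 1 + x + x^2/2 := by nlinarith
  have h2 : Real.exp (-x) ≤ (1 + x + x^2/2)⁻¹ := by
    rw [Real.exp_neg]
    exact inv_anti₀ hpos h
  have h3 : (1 + x + x^2/2)⁻¹ ≤ 1 - x + x^2/2 := by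
    rw [inv_le_iff_one_le_mul₀ hpos]
    nlinarith [sq_nonneg (x^2)]
  linarith

lemma sin_lb (t : ℝ) (ht : 0 ≤ t) : t - t^3/6 ≤ Real.sin t := by
  have hd : ∀ s : ℝ, HasDerivAt (fun u => Real.sin u - (u - u^3/6))
      (Real.cos s - (1 - s^2/2)) s := by
    intro s
    have h1 := (Real.hasDerivAt_sin s).sub
      ((hasDerivAt_id s).sub ((hasDerivAt_pow 3 s).div_const 6))
    refine h1.congr_deriv ?_
    ring_nf
  have hmono : Monotone (fun u => Real.sin u - (u - u^3/6)) := by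
    apply monotone_of_deriv_nonneg
    · exact fun s => (hd s).differentiableAt
    · intro s
      rw [(hd s).deriv]
      have := Real.one_sub_sq_div_two_le_cos (x := s)
      linarith
  have := hmono ht
  simpa using this

lemma pointwise (t : ℝ) (ht : 0 < t) (ht' : t ≤ π/3) :
    Real.log (2*t) - t^2/5 ≤ Real.log |2 * Real.sin t| := by
  have htpi : t < π := lt_of_le_of_lt ht' (by nlinarith [Real.pi_gt_three])
  have hs : 0 < Real.sin t := Real.sin_pos_of_pos_of_lt_pi ht htpi
  rw [abs_of_pos (by linarith)]
  have ht11 : t ≤ 1.1 := le_trans ht' (by nlinarith [Real.pi_lt_d2])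
  have key : t * Real.exp (-(t^2/5)) ≤ Real.sin t := by
    have h1 : Real.exp (-(t^2/5)) ≤ 1 - t^2/5 + (t^2/5)^2/2 :=
      exp_neg_le _ (by positivity)
    have h2 : t * (1 - t^2/5 + (t^2/5)^2/2) ≤ t - t^3/6 := by
      have hsq : t^2 ≤ 1.21 := by nlinarith
      nlinarith [pow_pos ht 3, mul_le_mul_of_nonneg_left hsq (pow_pos ht 3).le]
    have h3 := sin_lb t ht.le
    nlinarith
  have h4 : Real.log (2 * (t * Real.exp (-(t^2/5)))) ≤ Real.log (2 * Real.sin t) :=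
    Real.log_le_log (by positivity) (by nlinarith)
  calc Real.log (2*t) - t^2/5
      = Real.log (2 * (t * Real.exp (-(t^2/5)))) := by
        rw [show 2 * (t * Real.exp (-(t^2/5))) = (2*t) * Real.exp (-(t^2/5)) by ring,
          Real.log_mul (by positivity) (Real.exp_ne_zero _), Real.log_exp]
        ring
    _ ≤ _ := h4

lemma abs_log_le (t : ℝ) (ht : 0 < t) (ht' : t ≤ 2.2) :
    |Real.log t| ≤ 2 * t ^ (-(1:ℝ)/2) + 2 := by
  have hsq : Real.sqrt t > 0 := Real.sqrt_pos.mpr ht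
  have hr : t ^ (-(1:ℝ)/2) = (Real.sqrt t)⁻¹ := by
    rw [show (-1:ℝ)/2 = -(1/2) by norm_num, Real.rpow_neg ht.le, ← Real.sqrt_eq_rpow]
  rcases le_or_gt t 1 with h1 | h1
  · have hlog : Real.log t ≤ 0 := Real.log_nonpos ht.le h1
    rw [abs_of_nonpos hlog]
    have : -Real.log t = 2 * Real.log (Real.sqrt t)⁻¹ := by
      rw [Real.log_inv, Real.log_sqrt ht.le]; ring
    rw [this, hr]
    have := Real.log_le_sub_one_of_pos (inv_pos.mpr hsq)
    nlinarith [hsq.le]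
  · have hlog : 0 ≤ Real.log t := Real.log_nonneg h1.le
    rw [abs_of_nonneg hlog]
    have h2 := Real.log_le_sub_one_of_pos ht
    have : (0:ℝ) < t ^ (-(1:ℝ)/2) := Real.rpow_pos_of_pos ht _
    nlinarith

lemma integrable_of_log_bound (f : ℝ → ℝ) (θ : ℝ) (hθ : 0 < θ) (hθ' : θ ≤ 2.2)
    (hmeas : AEStronglyMeasurable f (volume.restrict (Set.Ioc 0 θ)))
    (hb : ∀ t ∈ Set.Ioc (0:ℝ) θ, |f t| ≤ |Real.log t| + 1) :
    IntervalIntegrable f volume 0 θ := by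
  rw [intervalIntegrable_iff_integrableOn_Ioc_of_le hθ.le]
  have hg : IntegrableOn (fun t : ℝ => 2 * t ^ (-(1:ℝ)/2) + 3) (Set.Ioc 0 θ) := by
    have h1 : IntervalIntegrable (fun t : ℝ => 2 * t ^ (-(1:ℝ)/2) + 3) volume 0 θ := by
      apply IntervalIntegrable.add
      · exact (intervalIntegrable_rpow' (by norm_num)).const_mul 2
      · exact intervalIntegrable_const
    rwa [intervalIntegrable_iff_integrableOn_Ioc_of_le hθ.le] at h1
  apply hg.mono' hmeas
  filter_upwards [ae_restrict_mem measurableSet_Ioc] with t ht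
  have h := hb t ht
  have h2 := abs_log_le t ht.1 (le_trans ht.2 hθ')
  have h3 : (0:ℝ) < t ^ (-(1:ℝ)/2) := Real.rpow_pos_of_pos ht.1 _
  rw [Real.norm_eq_abs]
  calc |f t| ≤ |Real.log t| + 1 := h
    _ ≤ 2 * t ^ (-(1:ℝ)/2) + 3 := by linarith

lemma intInt_log (θ : ℝ) (hθ : 0 < θ) (hθ' : θ ≤ 2.2) :
    IntervalIntegrable Real.log volume 0 θ := by
  apply integrable_of_log_bound _ _ hθ hθ'
  · exact Real.measurable_log.aestronglyMeasurable
  · intro t _; linarith [abs_nonneg (Real.log t)]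

lemma integral_log_zero (θ : ℝ) (hθ : 0 < θ) (hθ' : θ ≤ 2.2) :
    ∫ t in (0:ℝ)..θ, Real.log t = θ * Real.log θ - θ := by
  have := integral_eq_sub_of_hasDeriv_right_of_le (f := fun t => t * Real.log t - t)
    (f' := Real.log) hθ.le
    ((Real.continuous_mul_log.sub continuous_id).continuousOn)
    (fun x hx => by
      have h := (Real.hasDerivAt_mul_log (ne_of_gt hx.1)).sub (hasDerivAt_id x)
      exact (h.congr_deriv (by ring)).hasDerivWithinAt)
    (intInt_log θ hθ hθ')
  simpa using this

lemma lob_le (θ : ℝ) (hθ : 0 < θ) (hθ' : θ ≤ π/3) :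
    Lob θ ≤ θ - θ * Real.log (2*θ) + θ^3/15 := by
  have hpi : θ ≤ 1.1 := le_trans hθ' (by nlinarith [Real.pi_lt_d2])
  have hψ : IntervalIntegrable (fun t => Real.log (2*t) - t^2/5) volume 0 θ := by
    apply IntervalIntegrable.sub
    · have h := (intInt_log (2*θ) (by linarith) (by linarith)).comp_mul_left (c := 2)
      norm_num at h
      exact h
    · exact ((continuous_pow 2).div_const 5).intervalIntegrable _ _
  have hsin : IntervalIntegrable (fun t => Real.log |2 * Real.sin t|) volume 0 θ := by
    apply integrable_of_log_bound _ _ hθ (by linarith)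
    · exact (Real.measurable_log.comp
        ((continuous_const.mul Real.continuous_sin).abs.measurable)).aestronglyMeasurable
    · intro t ht
      have ht1 : t ≤ 1.1 := le_trans ht.2 hpi
      have hslb : t/2 ≤ Real.sin t := by
        have h := sin_lb t ht.1.le
        have hsq : t^2 ≤ 1.21 := by nlinarith [ht.1]
        have ht3 : t^3 = t * t^2 := by ring
        nlinarith [mul_le_mul_of_nonneg_left hsq ht.1.le, ht.1]
      have hsub : Real.sin t ≤ t := Real.sin_le ht.1.le
      have hspos : 0 < Real.sin t := by nlinarith [ht.1]
      rw [abs_of_pos (by linarith : (0:ℝ) < 2 * Real.sin t)]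
      have l1 : Real.log t ≤ Real.log (2 * Real.sin t) :=
        Real.log_le_log ht.1 (by linarith)
      have l2 : Real.log (2 * Real.sin t) ≤ Real.log 2 + Real.log t := by
        rw [← Real.log_mul two_ne_zero (ne_of_gt ht.1)]
        exact Real.log_le_log (by linarith) (by linarith)
      have hlog2 : Real.log 2 ≤ 1 := by
        have := Real.log_le_sub_one_of_pos (by norm_num : (0:ℝ) < 2); linarith
      rw [abs_le]
      constructor
      · linarith [neg_abs_le (Real.log t)]
      · linarith [le_abs_self (Real.log t)]
  have hmono : (∫ t in (0:ℝ)..θ, (Real.log (2*t) - t^2/5))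
      ≤ ∫ t in (0:ℝ)..θ, Real.log |2 * Real.sin t| := by
    apply intervalIntegral.integral_mono_on hθ.le hψ hsin
    intro t ht
    rcases eq_or_lt_of_le ht.1 with h0 | h0
    · simp [← h0]
    · exact pointwise t h0 (le_trans ht.2 hθ')
  have hval : (∫ t in (0:ℝ)..θ, (Real.log (2*t) - t^2/5))
      = θ * Real.log (2*θ) - θ - θ^3/15 := by
    rw [intervalIntegral.integral_sub (by
        have h := (intInt_log (2*θ) (by linarith) (by linarith)).comp_mul_left (c := 2)
        norm_num at h; exact h)
      (((continuous_pow 2).div_const 5).intervalIntegrable _ _)]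
    have h1 : (∫ t in (0:ℝ)..θ, Real.log (2*t)) = θ * Real.log (2*θ) - θ := by
      have := mul_integral_comp_mul_left (a := 0) (b := θ) (c := 2) (f := Real.log)
      rw [mul_zero] at this
      rw [integral_log_zero (2*θ) (by linarith) (by linarith)] at this
      linarith
    have h2 : (∫ t in (0:ℝ)..θ, t^2/5) = θ^3/15 := by
      rw [intervalIntegral.integral_div, integral_pow]
      ring
    rw [h1, h2]
  rw [Lob]
  have : θ * Real.log (2*θ) - θ - θ^3/15 ≤ ∫ t in (0:ℝ)..θ, Real.log |2 * Real.sin t| := by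
    rw [← hval]; exact hmono
  linarith

lemma log_three : (1.074 : ℝ) < Real.log 3 := by
  rw [Real.lt_log_iff_exp_lt (by norm_num)]
  have he : Real.exp 1.074 = Real.exp 1 * Real.exp 0.074 := by
    rw [← Real.exp_add]; norm_num
  have h1 : Real.exp 1 < 2.7182818286 := Real.exp_one_lt_d9
  have h2 : Real.exp 0.074 < 1/0.926 := by
    have h3 : (0.926:ℝ) < Real.exp (-0.074) := by
      have := Real.add_one_lt_exp (show (-0.074:ℝ) ≠ 0 by norm_num)
      linarith
    rw [show (0.074:ℝ) = -(-0.074) by norm_num, Real.exp_neg]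
    rw [show (1:ℝ)/0.926 = (0.926:ℝ)⁻¹ by norm_num]
    exact inv_strictAnti₀ (by norm_num) h3
  rw [he]
  calc Real.exp 1 * Real.exp 0.074 < 2.7182818286 * (1/0.926) := by
        apply mul_lt_mul'' h1 h2 (Real.exp_pos _).le (Real.exp_pos _).le
    _ < 3 := by norm_num

end VolBAux

theorem stmt4 (n : ℕ) (hn : 3 ≤ n) : volB n < 2 * π * Real.log (n / 2) := by
  have hn3 : (3:ℝ) ≤ (n:ℝ) := by exact_mod_cast hn
  have hnpos : (0:ℝ) < (n:ℝ) := by linarith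
  set N : ℝ := (n:ℝ) with hN
  have hθpos : 0 < π / N := div_pos Real.pi_pos hnpos
  have hθ' : π / N ≤ π / 3 :=
    div_le_div_of_nonneg_left Real.pi_pos.le (by norm_num) hn3
  have hb := VolBAux.lob_le (π/N) hθpos hθ'
  have hmul : volB N ≤ 2*N*((π/N) - (π/N) * Real.log (2*(π/N)) + (π/N)^3/15) := by
    rw [volB]
    exact mul_le_mul_of_nonneg_left hb (by linarith)
  have e0 : 2*N*((π/N) - (π/N) * Real.log (2*(π/N)) + (π/N)^3/15)
      = 2*π - 2*π * Real.log (2*(π/N)) + 2*π * (π^2/(15*N^2)) := by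
    field_simp
  have e1 : Real.log (2*(π/N)) = Real.log 2 + Real.log π - Real.log N := by
    rw [show 2*(π/N) = 2*π/N by ring, Real.log_div (by positivity) (ne_of_gt hnpos),
      Real.log_mul two_ne_zero (ne_of_gt Real.pi_pos)]
  have e2 : Real.log (N/2) = Real.log N - Real.log 2 :=
    Real.log_div (ne_of_gt hnpos) two_ne_zero
  have hpilt : π < 3.15 := by
    have := Real.pi_lt_d2; linarith
  have hlogpi : (1.074:ℝ) < Real.log π := by
    have h3 : Real.log 3 ≤ Real.log π := Real.log_le_log (by norm_num) Real.pi_gt_three.le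
    linarith [VolBAux.log_three]
  have key : π^2/(15*N^2) < Real.log π - 1 := by
    have h1 : π^2 < 9.9225 := by nlinarith [Real.pi_pos]
    have h2 : (135:ℝ) ≤ 15*N^2 := by nlinarith
    have h3 : π^2/(15*N^2) ≤ π^2/135 := by
      apply div_le_div_of_nonneg_left (by positivity) (by norm_num) h2
    have h4 : π^2/135 < 0.0736 := by nlinarith
    linarith
  have key2 : 2*π * (π^2/(15*N^2)) < 2*π * (Real.log π - 1) :=
    mul_lt_mul_of_pos_left key (by positivity)
  calc volB N ≤ 2*π - 2*π * Real.log (2*(π/N)) + 2*π * (π^2/(15*N^2)) := by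
        rw [← e0]; exact hmul
    _ < 2*π - 2*π * (Real.log 2 + Real.log π - Real.log N) + 2*π*(Real.log π - 1) := by
        rw [e1]; linarith
    _ = 2*π * (Real.log N - Real.log 2) := by ring
    _ = 2*π * Real.log (N/2) := by rw [e2]
end

section
/- Fix an integer s ≥ 2. Then for every integer n ≥ 2, vol(B_{ns}) − vol(B_n) < 2π·log s, i.e. 2ns·L(π/(ns)) − 2n·L(π/n) < 2π·log s. -/
open Real MeasureTheory Set intervalIntegral

lemma sin_nat_mul_le (x : ℝ) (hx : 0 ≤ x) : ∀ k : ℕ, (k : ℝ) * x ≤ π / 2 →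
    Real.sin ((k : ℝ) * x) ≤ (k : ℝ) * Real.sin x := by
  intro k
  induction k with
  | zero => simp
  | succ k ih =>
    intro hk
    push_cast at hk ⊢
    have hk' : (k : ℝ) * x ≤ π / 2 := by nlinarith [Nat.cast_nonneg (α := ℝ) k]
    have h1 : Real.sin ((k : ℝ) * x) ≤ (k : ℝ) * Real.sin x := ih hk'
    have hsk : 0 ≤ Real.sin ((k : ℝ) * x) :=
      Real.sin_nonneg_of_nonneg_of_le_pi (by positivity) (by nlinarith [Real.pi_pos])
    have hsx : 0 ≤ Real.sin x := by
      apply Real.sin_nonneg_of_nonneg_of_le_pi hx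
      nlinarith [Real.pi_pos, Nat.cast_nonneg (α := ℝ) k]
    have := Real.sin_add ((k : ℝ) * x) x
    have hc1 : Real.cos ((k : ℝ) * x) ≤ 1 := Real.cos_le_one _
    have hc2 : Real.cos x ≤ 1 := Real.cos_le_one _
    calc Real.sin (((k : ℝ) + 1) * x) = Real.sin ((k : ℝ) * x) * Real.cos x
          + Real.cos ((k : ℝ) * x) * Real.sin x := by rw [add_mul, one_mul, Real.sin_add]
    _ ≤ (k : ℝ) * Real.sin x + 1 * Real.sin x := by
        nlinarith [mul_nonneg hsk (sub_nonneg.2 hc2), mul_nonneg hsx (sub_nonneg.2 hc1)]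
    _ = ((k : ℝ) + 1) * Real.sin x := by ring

lemma sin_nat_mul_lt (s : ℕ) (hs : 2 ≤ s) (x : ℝ) (hx : 0 < x)
    (hsx : (s : ℝ) * x ≤ π / 2) : Real.sin ((s : ℝ) * x) < (s : ℝ) * Real.sin x := by
  obtain ⟨m, rfl⟩ : ∃ m, s = m + 1 := ⟨s - 1, by omega⟩
  have hm : 1 ≤ m := by omega
  have hmx : (m : ℝ) * x ≤ π / 2 := by
    push_cast at hsx; nlinarith [Nat.cast_nonneg (α := ℝ) m]
  have hmx0 : 0 < (m : ℝ) * x := by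
    have : (1 : ℝ) ≤ m := by exact_mod_cast hm
    nlinarith
  have hsm : 0 < Real.sin ((m : ℝ) * x) :=
    Real.sin_pos_of_pos_of_lt_pi hmx0 (by nlinarith [Real.pi_pos])
  have hcx : Real.cos x < 1 := by
    have hsx0 : 0 < Real.sin x := Real.sin_pos_of_pos_of_lt_pi hx
      (by nlinarith [Real.pi_pos, (Nat.one_le_cast.2 hm : (1:ℝ) ≤ m)])
    nlinarith [Real.sin_sq_add_cos_sq x]
  have hsx0 : 0 ≤ Real.sin x := by
    apply Real.sin_nonneg_of_nonneg_of_le_pi hx.le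
    nlinarith [Real.pi_pos, (Nat.one_le_cast.2 hm : (1:ℝ) ≤ m)]
  have h1 : Real.sin ((m : ℝ) * x) ≤ (m : ℝ) * Real.sin x := sin_nat_mul_le x hx.le m hmx
  have hc2 : Real.cos ((m : ℝ) * x) ≤ 1 := Real.cos_le_one _
  push_cast
  calc Real.sin (((m : ℝ) + 1) * x) = Real.sin ((m : ℝ) * x) * Real.cos x
        + Real.cos ((m : ℝ) * x) * Real.sin x := by rw [add_mul, one_mul, Real.sin_add]
  _ < (m : ℝ) * Real.sin x + 1 * Real.sin x := by nlinarith
  _ = ((m : ℝ) + 1) * Real.sin x := by ring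

lemma integrable_logsin (c b : ℝ) (hc : 0 < c) (hb : 0 < b) (hcb : c * b ≤ π / 2) :
    IntervalIntegrable (fun t => Real.log (2 * Real.sin (c * t))) volume 0 b := by
  have hg : IntervalIntegrable (fun t : ℝ => 2 * c ^ (-(1/2) : ℝ) * t ^ (-(1/2) : ℝ) + 1)
      volume 0 b :=
    ((intervalIntegral.intervalIntegrable_rpow' (by norm_num)).const_mul _).add
      intervalIntegrable_const
  rw [intervalIntegrable_iff_integrableOn_Ioc_of_le hb.le] at hg ⊢
  have hmeas : AEStronglyMeasurable (fun t => Real.log (2 * Real.sin (c * t)))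
      (volume.restrict (Ioc 0 b)) := by
    apply Measurable.aestronglyMeasurable
    exact Real.measurable_log.comp (by fun_prop)
  apply MeasureTheory.Integrable.mono hg hmeas
  filter_upwards [ae_restrict_mem measurableSet_Ioc] with t ht
  set x := c * t with hxdef
  have hx0 : 0 < x := mul_pos hc ht.1
  have hxle : x ≤ π / 2 := le_trans (by nlinarith [ht.2]) hcb
  have hsinpos : 0 < Real.sin x := Real.sin_pos_of_pos_of_lt_pi hx0
    (lt_of_le_of_lt hxle (by nlinarith [Real.pi_pos]))
  have key1 : x ≤ 2 * Real.sin x := by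
    have h1 : 2 * x / π ≤ Real.sin x := by
      have := Real.mul_le_sin hx0.le hxle
      calc 2 * x / π = 2 / π * x := by ring
      _ ≤ Real.sin x := this
    rw [div_le_iff₀ Real.pi_pos] at h1
    nlinarith [Real.pi_le_four]
  have habs : |Real.log (2 * Real.sin x)| ≤ 2 * x ^ (-(1/2) : ℝ) + 1 := by
    have hrp : (0:ℝ) ≤ x ^ (-(1/2) : ℝ) := Real.rpow_nonneg hx0.le _
    rcases le_or_gt 1 (2 * Real.sin x) with h | h
    · rw [abs_of_nonneg (Real.log_nonneg h)]
      have := Real.log_le_sub_one_of_pos (by linarith : (0:ℝ) < 2 * Real.sin x)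
      nlinarith [Real.sin_le_one x]
    · rw [abs_of_neg (Real.log_neg (by linarith) h)]
      have h2 : Real.log x ≤ Real.log (2 * Real.sin x) := Real.log_le_log hx0 key1
      have h3 : -Real.log x ≤ 2 * x ^ (-(1/2) : ℝ) := by
        have hy : (0:ℝ) < x ^ (-(1/2) : ℝ) := Real.rpow_pos_of_pos hx0 _
        have h4 : Real.log (x ^ (-(1/2) : ℝ)) = (-(1/2)) * Real.log x := Real.log_rpow hx0 _
        have h5 := Real.log_le_sub_one_of_pos hy
        linarith
      linarith
  have hxrw : x ^ (-(1/2) : ℝ) = c ^ (-(1/2) : ℝ) * t ^ (-(1/2) : ℝ) :=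
    Real.mul_rpow hc.le ht.1.le
  rw [Real.norm_eq_abs, Real.norm_eq_abs]
  have ht0 : (0:ℝ) < t := ht.1
  have hg0 : (0:ℝ) ≤ 2 * c ^ (-(1/2) : ℝ) * t ^ (-(1/2) : ℝ) + 1 := by positivity
  rw [abs_of_nonneg hg0]
  calc |Real.log (2 * Real.sin (c * t))| ≤ 2 * x ^ (-(1/2) : ℝ) + 1 := habs
  _ = 2 * c ^ (-(1/2) : ℝ) * t ^ (-(1/2) : ℝ) + 1 := by rw [hxrw]; ring
theorem stmt6 (s : ℕ) (hs : 2 ≤ s) (n : ℕ) (hn : 2 ≤ n) :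
    volB (n * s) - volB n < 2 * π * Real.log s := by
  have hn0 : (0:ℝ) < n := by positivity
  have hs0 : (0:ℝ) < s := by positivity
  have hn2 : (2:ℝ) ≤ n := by exact_mod_cast hn
  have hs2 : (2:ℝ) ≤ s := by exact_mod_cast hs
  have hpi := Real.pi_pos
  set b : ℝ := π / n with hbdef
  have hb : 0 < b := by positivity
  have hb2 : b ≤ π / 2 := by
    rw [hbdef, div_le_div_iff₀ hn0 (by norm_num)]
    nlinarith
  set f : ℝ → ℝ := fun t => Real.log (2 * Real.sin t) with hfdef
  -- rewrite Lob without abs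
  have hLob : ∀ θ : ℝ, Lob θ = -∫ t in (0:ℝ)..θ, f t := by
    intro θ
    simp only [Lob, hfdef, Real.log_abs]
  -- integrability
  have hI2 : IntervalIntegrable f volume 0 b := by
    have := integrable_logsin 1 b one_pos hb (by linarith)
    simpa [hfdef] using this
  have hI3 : IntervalIntegrable (fun u => f (u / s)) volume 0 b := by
    have hinv : (0:ℝ) < (s:ℝ)⁻¹ := by positivity
    have := integrable_logsin ((s:ℝ)⁻¹) b hinv hb
      (by rw [inv_mul_le_iff₀ hs0]; nlinarith)
    simpa [hfdef, div_eq_inv_mul] using this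
  -- substitution
  have hsub : (∫ u in (0:ℝ)..b, f (u / s)) = (s:ℝ) * ∫ t in (0:ℝ)..(π / ((n:ℝ) * s)), f t := by
    rw [intervalIntegral.integral_comp_div f (ne_of_gt hs0)]
    rw [show (0:ℝ) / s = 0 by ring, show b / s = π / ((n:ℝ) * s) by rw [hbdef]; ring]
    simp [smul_eq_mul]
  -- pointwise strict inequality
  have hpt : ∀ u ∈ Set.Ioc (0:ℝ) b, f u - f (u / s) < Real.log s := by
    intro u hu
    have hu0 : 0 < u := hu.1
    have hub : u ≤ b := hu.2
    have hx0 : 0 < u / s := by positivity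
    have hkey : Real.sin ((s:ℝ) * (u / s)) < (s:ℝ) * Real.sin (u / s) :=
      sin_nat_mul_lt s hs (u / s) hx0 (by rw [mul_div_cancel₀ _ (ne_of_gt hs0)]; linarith)
    rw [mul_div_cancel₀ _ (ne_of_gt hs0)] at hkey
    have hsinu : 0 < Real.sin u := Real.sin_pos_of_pos_of_lt_pi hu0 (by nlinarith)
    have hsinus : 0 < Real.sin (u / s) := Real.sin_pos_of_pos_of_lt_pi hx0
      (by rw [div_lt_iff₀ hs0]; nlinarith)
    have hlt : Real.log (2 * Real.sin u) < Real.log ((s:ℝ) * (2 * Real.sin (u / s))) :=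
      Real.log_lt_log (by positivity) (by nlinarith)
    rw [Real.log_mul (ne_of_gt hs0) (by positivity)] at hlt
    simp only [hfdef]
    linarith
  -- strict integral inequality
  have hIlt : (∫ u in (0:ℝ)..b, (f u - f (u / s))) < ∫ _ in (0:ℝ)..b, Real.log s := by
    apply intervalIntegral.integral_lt_integral_of_ae_le_of_measure_setOf_lt_ne_zero hb.le
      (hI2.sub hI3) intervalIntegrable_const
    · filter_upwards [MeasureTheory.ae_restrict_mem measurableSet_Ioc] with u hu
      exact (hpt u hu).le
    · have hsubset : Set.Ioc (0:ℝ) b ⊆ {x | f x - f (x / s) < Real.log s} :=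
        fun u hu => hpt u hu
      intro h0
      have h1 : volume.restrict (Set.Ioc (0:ℝ) b) (Set.Ioc (0:ℝ) b) ≤
          volume.restrict (Set.Ioc (0:ℝ) b) {x | f x - f (x / s) < Real.log s} :=
        MeasureTheory.measure_mono hsubset
      rw [h0, MeasureTheory.Measure.restrict_apply_self] at h1
      simp only [Real.volume_Ioc, sub_zero, nonpos_iff_eq_zero, ENNReal.ofReal_eq_zero] at h1
      linarith
  rw [intervalIntegral.integral_sub hI2 hI3, intervalIntegral.integral_const, hsub] at hIlt
  -- assemble
  have hvol1 : volB ((n:ℝ) * s) = -(2 * ((n:ℝ) * s)) * ∫ t in (0:ℝ)..(π / ((n:ℝ) * s)), f t := by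
    rw [volB, hLob]; ring
  have hvol2 : volB n = -(2 * (n:ℝ)) * ∫ t in (0:ℝ)..b, f t := by
    rw [volB, hLob, hbdef]; ring
  have hcast : volB (↑n * ↑s) = volB ((n:ℝ) * (s:ℝ)) := by push_cast; ring_nf
  rw [hcast, hvol1, hvol2]
  have hblog : (b - 0) • Real.log s = b * Real.log s := by simp [smul_eq_mul]
  rw [hblog] at hIlt
  have hfinal : 2 * (n:ℝ) * (b * Real.log s) = 2 * π * Real.log s := by
    rw [hbdef]; field_simp
  nlinarith [hIlt]
end

section
/- The function n ↦ L(π/n) is strictly decreasing for real n ≥ 6; consequently for integers 6 ≤ n < m, vol(B_n)/n > vol(B_m)/m. -/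
open Real

private lemma f_meas : Measurable (fun t : ℝ => Real.log |2 * Real.sin t|) :=
  Real.measurable_log.comp ((Real.continuous_sin.measurable.const_mul 2).abs)

/-- integrability on `[0, θ]` for `0 < θ ≤ π/6`. -/
private lemma f_intOn {θ : ℝ} (hθ : 0 < θ) (hθ' : θ ≤ π / 6) :
    IntervalIntegrable (fun t : ℝ => Real.log |2 * Real.sin t|) MeasureTheory.volume 0 θ := by
  have hg : IntervalIntegrable (fun t : ℝ => 2 * t ^ (-(1:ℝ)/2)) MeasureTheory.volume 0 θ :=
    (intervalIntegral.intervalIntegrable_rpow' (by norm_num)).const_mul 2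
  refine hg.mono_fun' (f_meas.aestronglyMeasurable) ?_
  rw [Set.uIoc_of_le hθ.le]
  refine (MeasureTheory.ae_restrict_iff' measurableSet_Ioc).mpr (MeasureTheory.ae_of_all _ ?_)
  intro t ht
  obtain ⟨ht0, htθ⟩ := ht
  have htpi : t ≤ π / 2 := by
    have := Real.pi_pos; linarith
  have hsinpos : 0 < Real.sin t :=
    Real.sin_pos_of_pos_of_lt_pi ht0 (by have := Real.pi_pos; linarith)
  have habs : |2 * Real.sin t| = 2 * Real.sin t := abs_of_pos (by linarith)
  -- lower bound : 2 sin t ≥ t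
  have hlow : t ≤ 2 * Real.sin t := by
    have h1 : 2 / π * t ≤ Real.sin t := Real.mul_le_sin ht0.le htpi
    have h1' : 2 * t ≤ π * Real.sin t := by
      rw [div_mul_eq_mul_div, div_le_iff₀ (by positivity : (0:ℝ) < π)] at h1
      linarith
    nlinarith [Real.pi_le_four, Real.pi_pos]
  -- upper bound : 2 sin t ≤ 1
  have hup : 2 * Real.sin t ≤ 1 := by
    have : Real.sin t ≤ Real.sin (π / 6) := by
      apply Real.sin_le_sin_of_le_of_le_pi_div_two (by linarith [Real.pi_pos])
        (by linarith [Real.pi_pos]) (by linarith)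
    rw [Real.sin_pi_div_six] at this
    linarith
  have hlogle : Real.log (2 * Real.sin t) ≤ 0 :=
    Real.log_nonpos (by linarith) hup
  have hlogge : Real.log t ≤ Real.log (2 * Real.sin t) :=
    Real.log_le_log ht0 hlow
  have hbound : -Real.log t ≤ 2 * t ^ (-(1:ℝ)/2) := by
    have h1 : Real.log (t ^ (-(1:ℝ)/2)) = (-(1:ℝ)/2) * Real.log t := Real.log_rpow ht0 _
    have h2 : Real.log (t ^ (-(1:ℝ)/2)) ≤ t ^ (-(1:ℝ)/2) - 1 :=
      Real.log_le_sub_one_of_pos (Real.rpow_pos_of_pos ht0 _)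
    have h3 : 0 < t ^ (-(1:ℝ)/2) := Real.rpow_pos_of_pos ht0 _
    nlinarith
  simp only [Real.norm_eq_abs, habs, abs_of_nonpos hlogle]
  calc -Real.log (2 * Real.sin t) ≤ -Real.log t := by linarith
    _ ≤ 2 * t ^ (-(1:ℝ)/2) := hbound

/-- continuity-based integrability on `[a, b] ⊆ (0, π)`. -/
private lemma f_intOn' {a b : ℝ} (ha : 0 < a) (hab : a ≤ b) (hb : b < π) :
    IntervalIntegrable (fun t : ℝ => Real.log |2 * Real.sin t|) MeasureTheory.volume a b := by
  apply ContinuousOn.intervalIntegrable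
  rw [Set.uIcc_of_le hab]
  apply ContinuousOn.log
  · exact ((continuous_const.mul Real.continuous_sin).abs).continuousOn
  · intro x hx
    have hsin : 0 < Real.sin x :=
      Real.sin_pos_of_pos_of_lt_pi (lt_of_lt_of_le ha hx.1) (lt_of_le_of_lt hx.2 hb)
    simp only [abs_ne_zero]
    positivity

private lemma Lob_strict {a b : ℝ} (ha : 0 < a) (hab : a < b) (hb : b ≤ π / 6) :
    Lob a < Lob b := by
  have hπ := Real.pi_pos
  have hbπ : b < π := by linarith
  have h1 : IntervalIntegrable (fun t : ℝ => Real.log |2 * Real.sin t|) MeasureTheory.volume 0 a :=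
    f_intOn ha (by linarith)
  have h2 : IntervalIntegrable (fun t : ℝ => Real.log |2 * Real.sin t|) MeasureTheory.volume a b :=
    f_intOn' ha hab.le hbπ
  have hsplit := intervalIntegral.integral_add_adjacent_intervals h1 h2
  have hpos : 0 < ∫ t in a..b, -Real.log |2 * Real.sin t| := by
    apply intervalIntegral.intervalIntegral_pos_of_pos_on (h2.neg) _ hab
    intro x hx
    have hx0 : 0 < x := lt_trans ha hx.1
    have hsin : 0 < Real.sin x := Real.sin_pos_of_pos_of_lt_pi hx0 (by linarith [hx.2])
    have hlt : Real.sin x < Real.sin (π / 6) := by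
      apply Real.sin_lt_sin_of_lt_of_le_pi_div_two (by linarith) (by linarith) (by linarith [hx.2])
    rw [Real.sin_pi_div_six] at hlt
    have habs : |2 * Real.sin x| = 2 * Real.sin x := abs_of_pos (by linarith)
    simp only [Pi.neg_apply, habs, neg_pos]
    exact Real.log_neg (by linarith) (by linarith)
  rw [intervalIntegral.integral_neg] at hpos
  unfold Lob
  linarith [hsplit]

theorem stmt17 :
    StrictAntiOn (fun x : ℝ => Lob (π / x)) (Set.Ici 6) ∧
    ∀ n m : ℕ, 6 ≤ n → n < m → volB n / n > volB m / m := by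
  have hπ := Real.pi_pos
  have key : ∀ x y : ℝ, 6 ≤ x → x < y → Lob (π / y) < Lob (π / x) := by
    intro x y hx hxy
    have hx0 : 0 < x := by linarith
    have hy0 : 0 < y := by linarith
    apply Lob_strict
    · positivity
    · exact div_lt_div_of_pos_left hπ hx0 hxy
    · rw [div_le_div_iff₀ hx0 (by norm_num : (0:ℝ) < 6)]
      nlinarith
  constructor
  · intro x hx y hy hxy
    exact key x y hx hxy
  · intro n m hn hnm
    have hn0 : (n:ℝ) ≠ 0 := by positivity
    have hm0 : (m:ℝ) ≠ 0 := by
      have : 0 < m := by omega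
      positivity
    have h1 : volB n / n = 2 * Lob (π / n) := by
      unfold volB; field_simp
    have h2 : volB m / m = 2 * Lob (π / m) := by
      unfold volB; field_simp
    rw [h1, h2]
    have := key n m (by exact_mod_cast hn) (by exact_mod_cast hnm)
    linarith
end
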